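/- arXiv:math/0109185 — 6 statements merged into one kernel-verified Lean document; each statement's English description precedes it below -/
import Mathlib

section
/- For the Gegenbauer polynomials Cₙ^γ(x) with x and n fixed, one has the finite expansion Cₙ^γ(x) = zⁿ Σ_{k=0}^n (cₖ/zᵏ) H_{n−k}(ξ)/(n−k)!, where z = √(γ(1−2x²)), ξ = xγ/z, and the cₖ are the Maclaurin coefficients of e^{−2xγw + γ(1−2x²)w²}(1−2xw+w²)^{−γ}. -/
open Filter Topology

lemma aux_ofScalars_coeff (a : ℕ → ℂ) (n : ℕ) :
    (FormalMultilinearSeries.ofScalars ℂ a).coeff n = a n := by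
  simp [FormalMultilinearSeries.ofScalars, FormalMultilinearSeries.coeff, List.prod_ofFn]

lemma aux_summable_norm {a : ℕ → ℂ} {w₀ w : ℂ} (h : Summable (fun k => a k * w₀ ^ k))
    (hw : ‖w‖ < ‖w₀‖) : Summable (fun k => ‖a k * w ^ k‖) := by
  have hw₀ : (0:ℝ) < ‖w₀‖ := lt_of_le_of_lt (norm_nonneg _) hw
  obtain ⟨M, hM⟩ := (h.tendsto_atTop_zero.norm.bddAbove_range)
  set r : ℝ := ‖w‖ / ‖w₀‖ with hr
  have hr0 : 0 ≤ r := div_nonneg (norm_nonneg _) hw₀.le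
  have hr1 : r < 1 := (div_lt_one hw₀).2 hw
  refine Summable.of_nonneg_of_le (fun k => norm_nonneg _) (fun k => ?_)
    ((summable_geometric_of_lt_one hr0 hr1).mul_left M)
  have h1 : ‖a k * w ^ k‖ = ‖a k * w₀ ^ k‖ * r ^ k := by
    rw [norm_mul, norm_mul, norm_pow, norm_pow, hr, div_pow, mul_assoc]
    congr 1
    rw [mul_div_cancel₀]
    exact pow_ne_zero _ (ne_of_gt hw₀)
  rw [h1]
  exact mul_le_mul_of_nonneg_right (hM (Set.mem_range_self k)) (pow_nonneg hr0 k)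

/-- Finite Hermite expansion of Gegenbauer polynomials:
`Cₙ^γ(x) = zⁿ Σ_{k=0}^n (cₖ/zᵏ) H_{n-k}(ξ)/(n-k)!` with
`z = √(γ(1-2x²))`, `ξ = xγ/z`. -/
theorem stmt_4 (γ x : ℂ) (hγ : γ ≠ 0) (hx : 1 - 2 * x ^ 2 ≠ 0)
    (C : ℕ → ℂ)
    (hC : ∀ᶠ w in 𝓝 (0:ℂ), HasSum (fun m => C m * w ^ m)
      ((1 - 2 * x * w + w ^ 2) ^ (-γ)))
    (z : ℂ) (hz : z ^ 2 = γ * (1 - 2 * x ^ 2))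
    (c : ℕ → ℂ)
    (hc : ∀ᶠ w in 𝓝 (0:ℂ), HasSum (fun k => c k * w ^ k)
      (Complex.exp (-(2 * x * γ) * w + γ * (1 - 2 * x ^ 2) * w ^ 2) *
        (1 - 2 * x * w + w ^ 2) ^ (-γ)))
    (H : ℕ → ℂ → ℂ)
    (hH : ∀ y w : ℂ, HasSum (fun m => H m y / (Nat.factorial m : ℂ) * w ^ m)
      (Complex.exp (2 * y * w - w ^ 2)))
    (n : ℕ) :
    C n = z ^ n * ∑ k ∈ Finset.range (n + 1),
      c k / z ^ k * H (n - k) (x * γ / z) / (Nat.factorial (n - k) : ℂ) := by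
  have hz0 : z ≠ 0 := by
    intro h
    rw [h] at hz
    exact (mul_ne_zero hγ hx) (by simpa using hz.symm)
  set ξ : ℂ := x * γ / z with hξ
  set b : ℕ → ℂ := fun m => z ^ m * H m ξ / (Nat.factorial m : ℂ) with hbdef
  -- the generating series for `b` converges everywhere
  have hb : ∀ w : ℂ, HasSum (fun m => b m * w ^ m)
      (Complex.exp (2 * x * γ * w - γ * (1 - 2 * x ^ 2) * w ^ 2)) := by
    intro w
    have h1 := hH ξ (z * w)
    have e2 : 2 * ξ * (z * w) - (z * w) ^ 2
        = 2 * x * γ * w - γ * (1 - 2 * x ^ 2) * w ^ 2 := by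
      have hzξ : ξ * z = x * γ := div_mul_cancel₀ _ hz0
      rw [show 2 * ξ * (z * w) = 2 * (ξ * z) * w by ring, hzξ, mul_pow, hz]
      ring
    have e1 : (fun m => H m ξ / (Nat.factorial m : ℂ) * (z * w) ^ m)
        = fun m => b m * w ^ m := by
      funext m
      simp only [hbdef, mul_pow]
      ring
    rw [e2, e1] at h1
    exact h1
  -- extract a radius of convergence for `c`
  obtain ⟨ε, hε, hcball⟩ := Metric.eventually_nhds_iff.1 hc
  set w₀ : ℂ := ((ε / 2 : ℝ) : ℂ) with hw₀def
  have hw₀norm : ‖w₀‖ = ε / 2 := by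
    rw [hw₀def, Complex.norm_real, Real.norm_eq_abs, abs_of_pos (by linarith)]
  have hw₀sum : Summable (fun k => c k * w₀ ^ k) := by
    refine (hcball ?_).summable
    rw [dist_zero_right, hw₀norm]
    linarith
  -- Cauchy product: the convolution series converges to the Gegenbauer g.f.
  have key : ∀ᶠ w in 𝓝 (0:ℂ), HasSum
      (fun m => (∑ k ∈ Finset.range (m + 1), c k * b (m - k)) * w ^ m)
      ((1 - 2 * x * w + w ^ 2) ^ (-γ)) := by
    have hball : ∀ᶠ w in 𝓝 (0:ℂ), ‖w‖ < ε / 2 := by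
      have := Metric.ball_mem_nhds (0:ℂ) (show (0:ℝ) < ε / 2 by linarith)
      filter_upwards [this] with w hw
      simpa [Metric.mem_ball, dist_zero_right] using hw
    filter_upwards [hc, hball] with w hw1 hw2
    have hfn : Summable (fun k => ‖c k * w ^ k‖) :=
      aux_summable_norm hw₀sum (by rw [hw₀norm]; exact hw2)
    set w₁ : ℂ := ((‖w‖ + 1 : ℝ) : ℂ) with hw₁def
    have hgn : Summable (fun m => ‖b m * w ^ m‖) := by
      refine aux_summable_norm (hb w₁).summable ?_
      rw [hw₁def, Complex.norm_real, Real.norm_eq_abs,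
        abs_of_pos (by positivity)]
      linarith
    have hprod := hasSum_sum_range_mul_of_summable_norm hfn hgn
    rw [hw1.tsum_eq, (hb w).tsum_eq] at hprod
    have hval : Complex.exp (-(2 * x * γ) * w + γ * (1 - 2 * x ^ 2) * w ^ 2) *
          (1 - 2 * x * w + w ^ 2) ^ (-γ) *
          Complex.exp (2 * x * γ * w - γ * (1 - 2 * x ^ 2) * w ^ 2)
        = (1 - 2 * x * w + w ^ 2) ^ (-γ) := by
      rw [mul_right_comm, mul_comm (Complex.exp _), ← Complex.exp_add]
      rw [show 2 * x * γ * w - γ * (1 - 2 * x ^ 2) * w ^ 2 +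
        (-(2 * x * γ) * w + γ * (1 - 2 * x ^ 2) * w ^ 2) = 0 by ring]
      rw [Complex.exp_zero, one_mul]
    rw [hval] at hprod
    have eterm : ∀ m, ∑ k ∈ Finset.range (m + 1),
        (c k * w ^ k) * (b (m - k) * w ^ (m - k))
        = (∑ k ∈ Finset.range (m + 1), c k * b (m - k)) * w ^ m := by
      intro m
      rw [Finset.sum_mul]
      refine Finset.sum_congr rfl fun k hk => ?_
      have hk' : k ≤ m := Nat.lt_succ_iff.1 (Finset.mem_range.1 hk)
      rw [mul_mul_mul_comm, ← pow_add, Nat.add_sub_cancel' hk']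
    rw [show (fun m => (∑ k ∈ Finset.range (m + 1), c k * b (m - k)) * w ^ m)
      = fun m => ∑ k ∈ Finset.range (m + 1), (c k * w ^ k) * (b (m - k) * w ^ (m - k))
      from funext fun m => (eterm m).symm]
    exact hprod
  -- uniqueness of power series coefficients
  set f : ℂ → ℂ := fun w => (1 - 2 * x * w + w ^ 2) ^ (-γ) with hfdef
  have hp : HasFPowerSeriesAt f (FormalMultilinearSeries.ofScalars ℂ C) 0 := by
    rw [hasFPowerSeriesAt_iff]
    filter_upwards [hC] with w hw
    have e : (fun m => w ^ m • (FormalMultilinearSeries.ofScalars ℂ C).coeff m)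
        = fun m => C m * w ^ m := by
      funext m
      rw [aux_ofScalars_coeff, smul_eq_mul, mul_comm]
    rw [e, zero_add]
    exact hw
  have hq : HasFPowerSeriesAt f (FormalMultilinearSeries.ofScalars ℂ
      (fun m => ∑ k ∈ Finset.range (m + 1), c k * b (m - k))) 0 := by
    rw [hasFPowerSeriesAt_iff]
    filter_upwards [key] with w hw
    have e : (fun m => w ^ m • (FormalMultilinearSeries.ofScalars ℂ
          (fun m => ∑ k ∈ Finset.range (m + 1), c k * b (m - k))).coeff m)
        = fun m => (∑ k ∈ Finset.range (m + 1), c k * b (m - k)) * w ^ m := by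
      funext m
      rw [aux_ofScalars_coeff, smul_eq_mul, mul_comm]
    rw [e, zero_add]
    exact hw
  have hpq := hp.eq_formalMultilinearSeries hq
  have hcoeff : C n = ∑ k ∈ Finset.range (n + 1), c k * b (n - k) := by
    have := congrArg (fun s => FormalMultilinearSeries.coeff s n) hpq
    simpa [aux_ofScalars_coeff] using this
  rw [hcoeff, Finset.mul_sum]
  refine Finset.sum_congr rfl fun k hk => ?_
  have hk' : k ≤ n := Nat.lt_succ_iff.1 (Finset.mem_range.1 hk)
  have hzn : z ^ n = z ^ k * z ^ (n - k) := by
    rw [← pow_add, Nat.add_sub_cancel' hk']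
  have hb' : b (n - k) = z ^ (n - k) * H (n - k) ξ / ((n - k).factorial : ℂ) := rfl
  have hfac : ((n - k).factorial : ℂ) ≠ 0 := Nat.cast_ne_zero.2 (Nat.factorial_ne_zero _)
  rw [hb', hzn]
  field_simp
end

section
/- For the Laguerre polynomials Lₙ^α(x), with z = √(x − (α+1)/2) ≠ 0 and ξ = (x−α−1)/(2z), one has the finite expansion Lₙ^α(x) = (−1)ⁿ zⁿ Σ_{k=0}^n (cₖ/zᵏ) H_{n−k}(ξ)/(n−k)!, where cₖ are the Maclaurin coefficients in w of e^{−Aw+Bw²}(1+w)^{−α−1}e^{wx/(1+w)} with A = x−α−1 and B = x−(α+1)/2; moreover c₀ = 1, c₁ = c₂ = 0 and c₃ = (3x−α−1)/3. -/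
open Filter Topology
open FormalMultilinearSeries in
section
open scoped ENNReal NNReal





private lemma toSeries {a : ℕ → ℂ} {f : ℂ → ℂ}
    (h : ∀ᶠ w in 𝓝 (0:ℂ), HasSum (fun k => a k * w ^ k) (f w)) :
    HasFPowerSeriesAt f (ofScalars ℂ a) 0 := by
  obtain ⟨r, hr, hball⟩ := Metric.eventually_nhds_iff_ball.mp h
  set ρ : ℝ≥0 := Real.toNNReal (r/2) with hρ
  have hρr : (ρ : ℝ) = r / 2 := Real.coe_toNNReal _ (by linarith)
  have hw0 : ((r/2 : ℝ) : ℂ) ∈ Metric.ball (0:ℂ) r := by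
    simp only [Metric.mem_ball, Complex.dist_eq, sub_zero]
    rw [Complex.norm_real, Real.norm_eq_abs, abs_of_pos (by linarith)]; linarith
  have hsum0 := hball _ hw0
  refine ⟨(ρ : ℝ≥0∞), ?_, by simp [hρ]; positivity, ?_⟩
  · have h0 : Filter.Tendsto (fun n => a n * ((r/2:ℝ):ℂ) ^ n) atTop (𝓝 0) :=
      hsum0.summable.tendsto_atTop_zero
    have hb : (fun n => ‖ofScalars ℂ a n‖ * (ρ : ℝ) ^ n) =O[atTop] (fun _ => (1:ℝ)) := by
      refine (h0.norm.isBigO_one ℝ).congr' (Filter.Eventually.of_forall fun n => ?_) (by rfl)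
      show ‖a n * ((r/2:ℝ):ℂ) ^ n‖ = ‖ofScalars ℂ a n‖ * (ρ : ℝ) ^ n
      rw [norm_mul, ofScalars_norm, norm_pow, Complex.norm_real, Real.norm_eq_abs,
        abs_of_nonneg (by linarith), hρr]
    exact le_radius_of_isBigO _ hb
  · intro y hy
    rw [EMetric.mem_ball, edist_zero_right, enorm_eq_nnnorm, ENNReal.coe_lt_coe,
      ← NNReal.coe_lt_coe, coe_nnnorm, hρr] at hy
    have : y ∈ Metric.ball (0:ℂ) r := by
      simp only [Metric.mem_ball, Complex.dist_eq, sub_zero]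
      calc ‖y‖ < r/2 := hy
        _ < r := by linarith
    simpa only [zero_add, ofScalars_apply_eq, smul_eq_mul] using hball y this

private lemma coeff_unique {a b : ℕ → ℂ} {f : ℂ → ℂ}
    (ha : ∀ᶠ w in 𝓝 (0:ℂ), HasSum (fun k => a k * w ^ k) (f w))
    (hb : ∀ᶠ w in 𝓝 (0:ℂ), HasSum (fun k => b k * w ^ k) (f w)) : a = b :=
  ofScalars_series_injective ℂ ℂ ((toSeries ha).eq_formalMultilinearSeries (toSeries hb))

private lemma normSummable {a : ℕ → ℂ} {f : ℂ → ℂ}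
    (h : ∀ᶠ w in 𝓝 (0:ℂ), HasSum (fun k => a k * w ^ k) (f w)) :
    ∀ᶠ w in 𝓝 (0:ℂ), Summable (fun k => ‖a k * w ^ k‖) := by
  obtain ⟨r, hf⟩ := toSeries h
  filter_upwards [EMetric.ball_mem_nhds (0:ℂ) hf.r_pos] with w hw
  have := (ofScalars ℂ a).summable_norm_apply (x := w) (EMetric.ball_subset_ball hf.r_le hw)
  refine this.congr fun n => ?_
  rw [ofScalars_apply_eq, smul_eq_mul]

private lemma cauchyMul {a b : ℕ → ℂ} {f g : ℂ → ℂ}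
    (ha : ∀ᶠ w in 𝓝 (0:ℂ), HasSum (fun k => a k * w ^ k) (f w))
    (hb : ∀ᶠ w in 𝓝 (0:ℂ), HasSum (fun k => b k * w ^ k) (g w)) :
    ∀ᶠ w in 𝓝 (0:ℂ), HasSum
      (fun n => (∑ k ∈ Finset.range (n+1), a k * b (n-k)) * w ^ n) (f w * g w) := by
  filter_upwards [ha, hb, normSummable ha, normSummable hb] with w ha' hb' hna hnb
  have key := hasSum_sum_range_mul_of_summable_norm hna hnb
  rw [ha'.tsum_eq, hb'.tsum_eq] at key
  have h2 : (fun n => ∑ k ∈ Finset.range (n+1), (a k * w ^ k) * (b (n-k) * w ^ (n-k)))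
      = fun n => (∑ k ∈ Finset.range (n+1), a k * b (n-k)) * w ^ n := by
    funext n
    rw [Finset.sum_mul]
    refine Finset.sum_congr rfl fun k hk => ?_
    rw [Finset.mem_range, Nat.lt_succ_iff] at hk
    have hw : w ^ k * w ^ (n - k) = w ^ n := by rw [← pow_add, Nat.add_sub_cancel' hk]
    calc (a k * w ^ k) * (b (n-k) * w ^ (n-k)) = a k * b (n-k) * (w ^ k * w ^ (n-k)) := by ring
      _ = a k * b (n-k) * w ^ n := by rw [hw]
  rwa [h2] at key

private lemma coeff_eq_iteratedDeriv {a : ℕ → ℂ} {f : ℂ → ℂ}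
    (h : ∀ᶠ w in 𝓝 (0:ℂ), HasSum (fun k => a k * w ^ k) (f w)) (n : ℕ) :
    (n.factorial : ℂ) * a n = iteratedDeriv n f 0 := by
  obtain ⟨r, hf⟩ := toSeries h
  have key := hf.factorial_smul (1 : ℂ) n
  rw [ofScalars_apply_eq, one_pow, smul_eq_mul, mul_one, nsmul_eq_mul,
    ← iteratedDeriv_eq_iteratedFDeriv] at key
  exact key




section
variable (α x : ℂ)

private noncomputable def Gf : ℂ → ℂ := fun w => (1 + w) ^ (-α - 1) * Complex.exp (w * x / (1 + w))
private noncomputable def Sf : ℂ → ℂ := fun w => (-α-1)/(1+w) + x/(1+w)^2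
private noncomputable def Sf1 : ℂ → ℂ := fun w => (α+1)/(1+w)^2 - 2*x/(1+w)^3
private noncomputable def Sf2 : ℂ → ℂ := fun w => -2*(α+1)/(1+w)^3 + 6*x/(1+w)^4

private lemma ball_facts {w : ℂ} (hw : w ∈ Metric.ball (0:ℂ) 1) :
    (1 + w) ≠ 0 ∧ (1 + w) ∈ Complex.slitPlane := by
  rw [Metric.mem_ball, Complex.dist_eq, sub_zero] at hw
  have hre : |w.re| ≤ ‖w‖ := Complex.abs_re_le_norm w
  have h1 : 0 < (1 + w).re := by
    simp only [Complex.add_re, Complex.one_re]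
    have := abs_le.mp hre
    linarith
  refine ⟨fun h => by simp [h] at h1, Or.inl h1⟩

private lemma hasDerivAt_Gf {w : ℂ} (hw : w ∈ Metric.ball (0:ℂ) 1) :
    HasDerivAt (Gf α x) (Gf α x w * Sf α x w) w := by
  obtain ⟨hne, hslit⟩ := ball_facts hw
  have h1w : HasDerivAt (fun w : ℂ => 1 + w) 1 w := (hasDerivAt_id w).const_add 1
  have hcp : HasDerivAt (fun w : ℂ => (1 + w) ^ (-α - 1))
      ((-α - 1) * (1 + w) ^ (-α - 1 - 1) * 1) w := h1w.cpow_const hslit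
  have hu : HasDerivAt (fun w : ℂ => w * x / (1 + w))
      ((1 * x * (1 + w) - w * x * 1) / (1 + w) ^ 2) w :=
    ((hasDerivAt_id w).mul_const x).div h1w hne
  have hexp := hu.cexp
  have hmul := hcp.mul hexp
  have key : (-α - 1) * (1 + w) ^ (-α - 1 - 1) * 1 * Complex.exp (w * x / (1 + w)) +
      (1 + w) ^ (-α - 1) * (Complex.exp (w * x / (1 + w)) * ((1 * x * (1 + w) - w * x * 1) / (1 + w) ^ 2))
      = Gf α x w * Sf α x w := by
    rw [Complex.cpow_sub _ _ hne, Complex.cpow_one]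
    simp only [Gf, Sf]
    field_simp
    ring
  rw [key] at hmul
  exact hmul

private lemma hasDerivAt_Sf {w : ℂ} (hw : w ∈ Metric.ball (0:ℂ) 1) :
    HasDerivAt (Sf α x) (Sf1 α x w) w := by
  obtain ⟨hne, -⟩ := ball_facts hw
  have h1w : HasDerivAt (fun w : ℂ => 1 + w) 1 w := (hasDerivAt_id w).const_add 1
  have ha : HasDerivAt (fun w : ℂ => (-α-1)/(1+w))
      ((0 * (1 + w) - (-α-1) * 1) / (1 + w) ^ 2) w := (hasDerivAt_const w _).div h1w hne
  have hb : HasDerivAt (fun w : ℂ => x/(1+w)^2)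
      ((0 * (1 + w) ^ 2 - x * ((2:ℕ) * (1 + w) ^ (2-1) * 1)) / ((1 + w) ^ 2) ^ 2) w :=
    (hasDerivAt_const w _).div (h1w.pow 2) (pow_ne_zero _ hne)
  have hab := ha.add hb
  have key : (0 * (1 + w) - (-α-1) * 1) / (1 + w) ^ 2 +
      (0 * (1 + w) ^ 2 - x * ((2:ℕ) * (1 + w) ^ (2-1) * 1)) / ((1 + w) ^ 2) ^ 2
      = Sf1 α x w := by
    simp only [Sf1]
    field_simp
    ring
  rw [key] at hab
  exact hab

private lemma hasDerivAt_Sf1 {w : ℂ} (hw : w ∈ Metric.ball (0:ℂ) 1) :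
    HasDerivAt (Sf1 α x) (Sf2 α x w) w := by
  obtain ⟨hne, -⟩ := ball_facts hw
  have h1w : HasDerivAt (fun w : ℂ => 1 + w) 1 w := (hasDerivAt_id w).const_add 1
  have ha : HasDerivAt (fun w : ℂ => (α+1)/(1+w)^2)
      ((0 * (1 + w) ^ 2 - (α+1) * ((2:ℕ) * (1 + w) ^ (2-1) * 1)) / ((1 + w) ^ 2) ^ 2) w :=
    (hasDerivAt_const w _).div (h1w.pow 2) (pow_ne_zero _ hne)
  have hb : HasDerivAt (fun w : ℂ => 2*x/(1+w)^3)
      ((0 * (1 + w) ^ 3 - 2*x * ((3:ℕ) * (1 + w) ^ (3-1) * 1)) / ((1 + w) ^ 3) ^ 2) w :=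
    (hasDerivAt_const w _).div (h1w.pow 3) (pow_ne_zero _ hne)
  have hab := ha.sub hb
  have key : (0 * (1 + w) ^ 2 - (α+1) * ((2:ℕ) * (1 + w) ^ (2-1) * 1)) / ((1 + w) ^ 2) ^ 2 -
      (0 * (1 + w) ^ 3 - 2*x * ((3:ℕ) * (1 + w) ^ (3-1) * 1)) / ((1 + w) ^ 3) ^ 2
      = Sf2 α x w := by
    simp only [Sf2]
    field_simp
    ring
  rw [key] at hab
  exact hab
end

section
variable (α x : ℂ)

private lemma Gf_zero : Gf α x 0 = 1 := by
  simp [Gf]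

private lemma Gf_taylor :
    iteratedDeriv 1 (Gf α x) 0 = x - α - 1 ∧
    iteratedDeriv 2 (Gf α x) 0 = (x - α - 1)^2 + (α + 1) - 2*x ∧
    iteratedDeriv 3 (Gf α x) 0 = (x - α - 1)^3 + 3*(x - α - 1)*((α + 1) - 2*x)
      + (6*x - 2*(α + 1)) := by
  have h0 : (0:ℂ) ∈ Metric.ball (0:ℂ) 1 := Metric.mem_ball_self one_pos
  have hopen := Metric.isOpen_ball (x := (0:ℂ)) (ε := 1)
  set D1 : ℂ → ℂ := fun w => Gf α x w * Sf α x w with hD1def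
  set D2 : ℂ → ℂ := fun w => Gf α x w * Sf α x w * Sf α x w + Gf α x w * Sf1 α x w with hD2def
  have hD1 : ∀ w ∈ Metric.ball (0:ℂ) 1, HasDerivAt D1 (D2 w) w := fun w hw =>
    ((hasDerivAt_Gf α x hw).mul (hasDerivAt_Sf α x hw))
  have hD2 : ∀ w ∈ Metric.ball (0:ℂ) 1, HasDerivAt D2
      ((D2 w) * Sf α x w + D1 w * Sf1 α x w + (D1 w * Sf1 α x w + Gf α x w * Sf2 α x w)) w :=
    fun w hw => (((hasDerivAt_Gf α x hw).mul (hasDerivAt_Sf α x hw)).mul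
      (hasDerivAt_Sf α x hw)).add ((hasDerivAt_Gf α x hw).mul (hasDerivAt_Sf1 α x hw))
  have e1 : Set.EqOn (deriv (Gf α x)) D1 (Metric.ball (0:ℂ) 1) :=
    fun w hw => (hasDerivAt_Gf α x hw).deriv
  have e2 : Set.EqOn (deriv (deriv (Gf α x))) D2 (Metric.ball (0:ℂ) 1) := by
    intro w hw
    have : deriv (Gf α x) =ᶠ[𝓝 w] D1 := e1.eventuallyEq_of_mem (hopen.mem_nhds hw)
    rw [this.deriv_eq]
    exact (hD1 w hw).deriv
  have i1 : iteratedDeriv 1 (Gf α x) 0 = D1 0 := by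
    rw [iteratedDeriv_one]; exact e1 h0
  have i2 : iteratedDeriv 2 (Gf α x) 0 = D2 0 := by
    rw [show (2:ℕ) = 1 + 1 from rfl, iteratedDeriv_succ, iteratedDeriv_one]
    exact e2 h0
  have i3 : iteratedDeriv 3 (Gf α x) 0 =
      (D2 0) * Sf α x 0 + D1 0 * Sf1 α x 0 + (D1 0 * Sf1 α x 0 + Gf α x 0 * Sf2 α x 0) := by
    rw [show (3:ℕ) = 2 + 1 from rfl, iteratedDeriv_succ,
      show (2:ℕ) = 1 + 1 from rfl, iteratedDeriv_succ, iteratedDeriv_one]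
    have : deriv (deriv (Gf α x)) =ᶠ[𝓝 (0:ℂ)] D2 := e2.eventuallyEq_of_mem (hopen.mem_nhds h0)
    rw [this.deriv_eq]
    exact (hD2 0 h0).deriv
  have hS0 : Sf α x 0 = -α - 1 + x := by simp [Sf]
  have hS10 : Sf1 α x 0 = (α + 1) - 2*x := by simp [Sf1]
  have hS20 : Sf2 α x 0 = -2*(α+1) + 6*x := by simp [Sf2]
  have hG0 := Gf_zero α x
  refine ⟨?_, ?_, ?_⟩
  · rw [i1, hD1def]; simp only [hS0, hG0]; ring
  · rw [i2, hD2def]; simp only [hS0, hS10, hG0]; ring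
  · rw [i3, hD1def, hD2def]; simp only [hS0, hS10, hS20, hG0]; ring
end

private lemma expA_hasSum (A w : ℂ) :
    HasSum (fun n => (A ^ n / (n.factorial : ℂ)) * w ^ n) (Complex.exp (A * w)) := by
  have h := NormedSpace.expSeries_div_hasSum_exp (A * w)
  rw [← Complex.exp_eq_exp_ℂ] at h
  have heq : (fun n => (A * w) ^ n / (n.factorial : ℂ))
      = fun n => (A ^ n / (n.factorial : ℂ)) * w ^ n := by
    funext n; rw [mul_pow]; ring
  rwa [heq] at h

private lemma expB_hasSum (B w : ℂ) :
    HasSum (fun n => (if 2 ∣ n then B ^ (n/2) / (((n/2).factorial : ℕ) : ℂ) else 0) * w ^ n)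
      (Complex.exp (B * w ^ 2)) := by
  have h := expA_hasSum B (w ^ 2)
  have hinj : Function.Injective (fun m : ℕ => 2 * m) := fun a b hab => by
    simpa using hab
  rw [← Function.Injective.hasSum_iff hinj ?_]
  · have heq : ((fun n => (if 2 ∣ n then B ^ (n/2) / (((n/2).factorial : ℕ) : ℂ) else 0) * w ^ n)
        ∘ (fun m => 2 * m)) = fun m => (B ^ m / ((m.factorial : ℕ) : ℂ)) * (w ^ 2) ^ m := by
      funext m
      simp only [Function.comp_apply]
      rw [if_pos ⟨m, rfl⟩, Nat.mul_div_cancel_left m (by norm_num), ← pow_mul, mul_comm 2 m]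
    rw [heq]; exact h
  · intro n hn
    have hnd : ¬ 2 ∣ n := by
      rintro ⟨m, rfl⟩; exact hn ⟨m, rfl⟩
    rw [if_neg hnd, zero_mul]
end

/-- Finite Hermite expansion of Laguerre polynomials, with
`A = x-α-1`, `B = x-(α+1)/2`, `z = √B ≠ 0`, `ξ = (x-α-1)/(2z)`:
`Lₙ^α(x) = (-1)ⁿ zⁿ Σ_{k=0}^n (cₖ/zᵏ) H_{n-k}(ξ)/(n-k)!`, and
`c₀ = 1`, `c₁ = c₂ = 0`, `c₃ = (3x-α-1)/3`. -/
theorem stmt_8 (α x : ℂ) (L : ℕ → ℂ)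
    (hL : ∀ᶠ w in 𝓝 (0:ℂ), HasSum (fun m => (-1) ^ m * L m * w ^ m)
      ((1 + w) ^ (-α - 1) * Complex.exp (w * x / (1 + w))))
    (z : ℂ) (hz0 : z ≠ 0) (hz : z ^ 2 = x - (α + 1) / 2)
    (c : ℕ → ℂ)
    (hc : ∀ᶠ w in 𝓝 (0:ℂ), HasSum (fun k => c k * w ^ k)
      (Complex.exp (-(x - α - 1) * w + (x - (α + 1) / 2) * w ^ 2) *
        ((1 + w) ^ (-α - 1) * Complex.exp (w * x / (1 + w)))))
    (H : ℕ → ℂ → ℂ)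
    (hH : ∀ y w : ℂ, HasSum (fun m => H m y / (Nat.factorial m : ℂ) * w ^ m)
      (Complex.exp (2 * y * w - w ^ 2))) :
    (∀ n, L n = (-1) ^ n * z ^ n * ∑ k ∈ Finset.range (n + 1),
      c k / z ^ k * H (n - k) ((x - α - 1) / (2 * z)) / (Nat.factorial (n - k) : ℂ)) ∧
    c 0 = 1 ∧ c 1 = 0 ∧ c 2 = 0 ∧ c 3 = (3 * x - α - 1) / 3 := by
  have hfac : ∀ m : ℕ, ((Nat.factorial m : ℕ) : ℂ) ≠ 0 :=
    fun m => Nat.cast_ne_zero.mpr (Nat.factorial_ne_zero m)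
  -- Hermite series in z*w
  have hb : ∀ w : ℂ, HasSum
      (fun m => (H m ((x - α - 1) / (2 * z)) / (Nat.factorial m : ℂ) * z ^ m) * w ^ m)
      (Complex.exp ((x - α - 1) * w - (x - (α + 1) / 2) * w ^ 2)) := by
    intro w
    have h := hH ((x - α - 1) / (2 * z)) (z * w)
    have harg : 2 * ((x - α - 1) / (2 * z)) * (z * w) - (z * w) ^ 2
        = (x - α - 1) * w - (x - (α + 1) / 2) * w ^ 2 := by
      rw [mul_pow, hz]
      field_simp
    rw [harg] at h
    have heq : (fun m => H m ((x - α - 1) / (2 * z)) / (Nat.factorial m : ℂ) * (z * w) ^ m)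
        = fun m => (H m ((x - α - 1) / (2 * z)) / (Nat.factorial m : ℂ) * z ^ m) * w ^ m := by
      funext m; rw [mul_pow]; ring
    rwa [heq] at h
  -- Cauchy product: c-series times Hermite series equals the Laguerre generating function
  have hmain := cauchyMul hc (Filter.Eventually.of_forall hb)
  have hmain' : ∀ᶠ w in 𝓝 (0:ℂ), HasSum (fun n =>
      (∑ k ∈ Finset.range (n+1), c k *
        (H (n-k) ((x - α - 1) / (2 * z)) / (Nat.factorial (n-k) : ℂ) * z ^ (n-k))) * w ^ n)
      ((1 + w) ^ (-α - 1) * Complex.exp (w * x / (1 + w))) := by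
    refine hmain.mono fun w hw => ?_
    have hval : Complex.exp (-(x - α - 1) * w + (x - (α + 1) / 2) * w ^ 2) *
        ((1 + w) ^ (-α - 1) * Complex.exp (w * x / (1 + w))) *
        Complex.exp ((x - α - 1) * w - (x - (α + 1) / 2) * w ^ 2)
        = (1 + w) ^ (-α - 1) * Complex.exp (w * x / (1 + w)) := by
      rw [mul_comm, ← mul_assoc, ← Complex.exp_add,
        show (x - α - 1) * w - (x - (α + 1) / 2) * w ^ 2 +
          (-(x - α - 1) * w + (x - (α + 1) / 2) * w ^ 2) = 0 by ring,
        Complex.exp_zero, one_mul]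
    rwa [hval] at hw
  have hLc := coeff_unique (a := fun m => (-1:ℂ)^m * L m) hL hmain'
  constructor
  · intro n
    have e := congrFun hLc n
    have hsum : z ^ n * ∑ k ∈ Finset.range (n + 1),
        c k / z ^ k * H (n - k) ((x - α - 1) / (2 * z)) / (Nat.factorial (n - k) : ℂ)
        = ∑ k ∈ Finset.range (n+1), c k *
          (H (n-k) ((x - α - 1) / (2 * z)) / (Nat.factorial (n-k) : ℂ) * z ^ (n-k)) := by
      rw [Finset.mul_sum]
      refine Finset.sum_congr rfl fun k hk => ?_
      rw [Finset.mem_range, Nat.lt_succ_iff] at hk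
      have hzk : z ^ (n-k) * z ^ k = z ^ n := by rw [← pow_add, Nat.sub_add_cancel hk]
      have hdz : z ^ k / z ^ k = 1 := div_self (pow_ne_zero k hz0)
      calc z ^ n * (c k / z ^ k * H (n - k) ((x - α - 1) / (2 * z)) / (Nat.factorial (n - k) : ℂ))
          = (z ^ (n-k) * z ^ k) * (c k / z ^ k *
            H (n - k) ((x - α - 1) / (2 * z)) / (Nat.factorial (n - k) : ℂ)) := by rw [hzk]
        _ = z ^ k / z ^ k * (c k * (H (n - k) ((x - α - 1) / (2 * z)) /
            (Nat.factorial (n - k) : ℂ) * z ^ (n-k))) := by ring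
        _ = c k * (H (n-k) ((x - α - 1) / (2 * z)) / (Nat.factorial (n-k) : ℂ) * z ^ (n-k)) := by
            rw [hdz, one_mul]
    have he2 : Even (n + n) := ⟨n, rfl⟩
    calc L n = (-1:ℂ)^n * ((-1:ℂ)^n * L n) := by
          rw [← mul_assoc, ← pow_add, he2.neg_one_pow, one_mul]
      _ = (-1:ℂ)^n * ∑ k ∈ Finset.range (n+1), c k *
          (H (n-k) ((x - α - 1) / (2 * z)) / (Nat.factorial (n-k) : ℂ) * z ^ (n-k)) := by rw [e]
      _ = (-1:ℂ)^n * (z ^ n * ∑ k ∈ Finset.range (n + 1),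
          c k / z ^ k * H (n - k) ((x - α - 1) / (2 * z)) / (Nat.factorial (n - k) : ℂ)) := by
          rw [hsum]
      _ = (-1:ℂ)^n * z ^ n * ∑ k ∈ Finset.range (n + 1),
          c k / z ^ k * H (n - k) ((x - α - 1) / (2 * z)) / (Nat.factorial (n - k) : ℂ) := by
          ring
  -- coefficient values
  · have hLg : ∀ᶠ w in 𝓝 (0:ℂ), HasSum (fun m => ((-1:ℂ)^m * L m) * w ^ m) (Gf α x w) := hL
    have heA : ∀ w : ℂ, HasSum (fun n => ((-(x - α - 1)) ^ n / (Nat.factorial n : ℂ)) * w ^ n)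
        (Complex.exp (-(x - α - 1) * w)) := fun w => expA_hasSum _ w
    have heB := expB_hasSum (x - (α + 1) / 2)
    have hE := cauchyMul (Filter.Eventually.of_forall heA) (Filter.Eventually.of_forall heB)
    have hEG := cauchyMul hE hLg
    have hEG' : ∀ᶠ w in 𝓝 (0:ℂ), HasSum (fun n =>
        (∑ k ∈ Finset.range (n+1),
          (∑ j ∈ Finset.range (k+1), ((-(x - α - 1)) ^ j / (Nat.factorial j : ℂ)) *
            (if 2 ∣ (k-j) then (x - (α + 1) / 2) ^ ((k-j)/2) /
              ((((k-j)/2).factorial : ℕ) : ℂ) else 0)) * ((-1:ℂ)^(n-k) * L (n-k))) * w ^ n)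
        (Complex.exp (-(x - α - 1) * w + (x - (α + 1) / 2) * w ^ 2) *
          ((1 + w) ^ (-α - 1) * Complex.exp (w * x / (1 + w)))) := by
      refine hEG.mono fun w hw => ?_
      rw [show Complex.exp (-(x - α - 1) * w) * Complex.exp ((x - (α + 1) / 2) * w ^ 2)
          = Complex.exp (-(x - α - 1) * w + (x - (α + 1) / 2) * w ^ 2) from
          (Complex.exp_add _ _).symm] at hw
      exact hw
    have hcc := coeff_unique hc hEG'
    -- Taylor coefficients of the Laguerre generating function
    obtain ⟨i1, i2, i3⟩ := Gf_taylor α x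
    have hg0 := coeff_eq_iteratedDeriv hLg 0
    have hg1 := coeff_eq_iteratedDeriv hLg 1
    have hg2 := coeff_eq_iteratedDeriv hLg 2
    have hg3 := coeff_eq_iteratedDeriv hLg 3
    rw [iteratedDeriv_zero, Gf_zero] at hg0
    rw [i1] at hg1
    rw [i2] at hg2
    rw [i3] at hg3
    norm_num [Nat.factorial] at hg0 hg1 hg2 hg3
    have hL0 : L 0 = 1 := by linear_combination hg0
    have hL1 : L 1 = α + 1 - x := by linear_combination -hg1
    have hL2 : L 2 = ((x - α - 1)^2 + (α + 1) - 2*x)/2 := by linear_combination hg2/2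
    have hL3 : L 3 = -((x - α - 1)^3 + 3*(x - α - 1)*((α + 1) - 2*x) + (6*x - 2*(α + 1)))/6 := by
      linear_combination -hg3/6
    have hc0 := congrFun hcc 0
    have hc1 := congrFun hcc 1
    have hc2 := congrFun hcc 2
    have hc3 := congrFun hcc 3
    simp only [Finset.sum_range_succ, Finset.sum_range_zero, zero_add] at hc0 hc1 hc2 hc3
    norm_num [Nat.factorial] at hc0 hc1 hc2 hc3
    rw [hL0] at hc0 hc1 hc2 hc3
    rw [hL1] at hc1 hc2 hc3
    rw [hL2] at hc2 hc3
    rw [hL3] at hc3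
    refine ⟨by linear_combination hc0, by linear_combination hc1,
      by linear_combination hc2, by linear_combination hc3⟩
end

section
/- Let the polynomials pₙ(x) be defined by F(x,w) = Σ_{n≥0} pₙ(x)wⁿ, where F is analytic in w at w = 0 and F(x,0) = 1. Let A, B, C be complex numbers independent of w with B ≠ 0, and define cₖ(x) by e^{−Aw/(Bw−1)}(1−Bw)^{C+1} F(x,w) = Σ_{k≥0} cₖ(x)wᵏ. Then pₙ(x) = Bⁿ Σ_{k=0}^n (cₖ(x)/Bᵏ) L_{n−k}^{(C)}(ξ) with ξ = A/B, where Lₘ^{(C)} are the Laguerre polynomials. -/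
open Filter Topology

/-- Lemma 3.1: if `F(w) = Σ pₙ wⁿ` with `p₀ = 1` and
`e^{-Aw/(Bw-1)}(1-Bw)^{C+1} F(w) = Σ cₖ wᵏ`, then
`pₙ = Bⁿ Σ_{k=0}^n (cₖ/Bᵏ) L_{n-k}^{(C)}(A/B)`. -/
theorem stmt_9 (Lag : ℂ → ℕ → ℂ → ℂ)
    (hLag : ∀ (α x w : ℂ), ‖w‖ < 1 → HasSum (fun m => Lag α m x * w ^ m)
      ((1 - w) ^ (-α - 1) * Complex.exp (-w * x / (1 - w))))
    (f : ℂ → ℂ) (p : ℕ → ℂ)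
    (hF : ∀ᶠ w in 𝓝 (0:ℂ), HasSum (fun m => p m * w ^ m) (f w))
    (hp0 : p 0 = 1)
    (A B C : ℂ) (hB : B ≠ 0)
    (c : ℕ → ℂ)
    (hc : ∀ᶠ w in 𝓝 (0:ℂ), HasSum (fun k => c k * w ^ k)
      (Complex.exp (-A * w / (B * w - 1)) * (1 - B * w) ^ (C + 1) * f w))
    (n : ℕ) :
    p n = B ^ n * ∑ k ∈ Finset.range (n + 1), c k / B ^ k * Lag C (n - k) (A / B) := by
  set ξ : ℂ := A / B with hξ
  set q : ℕ → ℂ := fun n => ∑ k ∈ Finset.range (n + 1),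
    c k * (Lag C (n - k) ξ * B ^ (n - k)) with hq
  -- eventually `‖B * w‖ < 1`
  have hsmall : ∀ᶠ w in 𝓝 (0:ℂ), ‖B * w‖ < 1 := by
    have hcont : Continuous fun w : ℂ => ‖B * w‖ := by continuity
    have h0 : Filter.Tendsto (fun w : ℂ => ‖B * w‖) (𝓝 0) (𝓝 0) := by
      simpa using hcont.tendsto 0
    exact h0.eventually_lt_const one_pos
  -- the second power series representation of f
  have hG : ∀ᶠ w in 𝓝 (0:ℂ), HasSum (fun m => q m * w ^ m) (f w) := by
    filter_upwards [hF, hc, hsmall] with w hFw hcw hw1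
    have hne : (1 : ℂ) - B * w ≠ 0 := by
      intro h
      have h1 : (1:ℂ) = B * w := by linear_combination h
      rw [← h1] at hw1; simp at hw1
    have hne' : B * w - 1 ≠ 0 := by
      intro h; apply hne; linear_combination -h
    have hL := hLag C ξ (B * w) hw1
    have hc_norm : Summable fun k => ‖c k * w ^ k‖ := by
      rw [summable_norm_iff]; exact hcw.summable
    have hL_norm : Summable fun m => ‖Lag C m ξ * (B * w) ^ m‖ := by
      rw [summable_norm_iff]; exact hL.summable
    have hmul := hasSum_sum_range_mul_of_summable_norm hc_norm hL_norm
    rw [hcw.tsum_eq, hL.tsum_eq] at hmul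
    have hval : Complex.exp (-A * w / (B * w - 1)) * (1 - B * w) ^ (C + 1) * f w *
        ((1 - B * w) ^ (-C - 1) * Complex.exp (-(B * w) * ξ / (1 - B * w))) = f w := by
      have hcpow : (1 - B * w) ^ (C + 1) * (1 - B * w) ^ (-C - 1) = 1 := by
        rw [show (-C - 1 : ℂ) = -(C + 1) by ring, Complex.cpow_neg]
        refine mul_inv_cancel₀ ?_
        simp [Complex.cpow_eq_zero_iff, hne]
      have hexp : Complex.exp (-A * w / (B * w - 1)) *
          Complex.exp (-(B * w) * ξ / (1 - B * w)) = 1 := by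
        rw [← Complex.exp_add]
        rw [show -A * w / (B * w - 1) + -(B * w) * ξ / (1 - B * w) = 0 by
          rw [hξ, div_add_div _ _ hne' hne, div_eq_zero_iff]; left
          rw [show -(B * w) * (A / B) = -A * w * (B / B) by ring, div_self hB]; ring]
        exact Complex.exp_zero
      calc Complex.exp (-A * w / (B * w - 1)) * (1 - B * w) ^ (C + 1) * f w *
            ((1 - B * w) ^ (-C - 1) * Complex.exp (-(B * w) * ξ / (1 - B * w)))
          = ((1 - B * w) ^ (C + 1) * (1 - B * w) ^ (-C - 1)) *
            (Complex.exp (-A * w / (B * w - 1)) *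
              Complex.exp (-(B * w) * ξ / (1 - B * w))) * f w := by ring
        _ = f w := by rw [hcpow, hexp]; ring
    have hsum_eq : ∀ m, ∑ k ∈ Finset.range (m + 1),
        (c k * w ^ k) * (Lag C (m - k) ξ * (B * w) ^ (m - k)) = q m * w ^ m := by
      intro m
      rw [hq]
      rw [Finset.sum_mul]
      refine Finset.sum_congr rfl fun k hk => ?_
      have hk' : k ≤ m := Nat.lt_succ_iff.mp (Finset.mem_range.mp hk)
      have hw : w ^ k * w ^ (m - k) = w ^ m := by
        rw [← pow_add, Nat.add_sub_cancel' hk']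
      calc (c k * w ^ k) * (Lag C (m - k) ξ * (B * w) ^ (m - k))
          = c k * (Lag C (m - k) ξ * B ^ (m - k)) * (w ^ k * w ^ (m - k)) := by
            rw [mul_pow]; ring
        _ = c k * (Lag C (m - k) ξ * B ^ (m - k)) * w ^ m := by rw [hw]
    simpa only [hsum_eq, hval] using hmul
  -- uniqueness of power series coefficients
  have hcoeff : ∀ (a : ℕ → ℂ) (m : ℕ),
      (FormalMultilinearSeries.ofScalars ℂ a).coeff m = a m := by
    intro a m
    simp only [FormalMultilinearSeries.coeff, FormalMultilinearSeries.ofScalars,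
      ContinuousMultilinearMap.smul_apply, ContinuousMultilinearMap.mkPiAlgebraFin_apply,
      smul_eq_mul]
    rw [show (1 : Fin m → ℂ) = fun _ => (1:ℂ) from rfl, List.ofFn_const, List.prod_replicate,
      one_pow, mul_one]
  have h1 : HasFPowerSeriesAt f (FormalMultilinearSeries.ofScalars ℂ p) 0 := by
    rw [hasFPowerSeriesAt_iff]
    filter_upwards [hF] with w hw
    simpa [hcoeff, smul_eq_mul, mul_comm] using hw
  have h2 : HasFPowerSeriesAt f (FormalMultilinearSeries.ofScalars ℂ q) 0 := by
    rw [hasFPowerSeriesAt_iff]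
    filter_upwards [hG] with w hw
    simpa [hcoeff, smul_eq_mul, mul_comm] using hw
  have heq := h1.eq_formalMultilinearSeries h2
  have hpq : p n = q n := by
    have := congrArg (fun s : FormalMultilinearSeries ℂ ℂ ℂ => s.coeff n) heq
    simpa [hcoeff] using this
  rw [hpq, hq, Finset.mul_sum]
  refine Finset.sum_congr rfl fun k hk => ?_
  have hk' : k ≤ n := Nat.lt_succ_iff.mp (Finset.mem_range.mp hk)
  rw [pow_sub₀ B hB hk', div_eq_mul_inv]
  ring
end

section
/- With the Laguerre-expansion setup (coefficients cₖ defined by e^{−Aw/(Bw−1)}(1−Bw)^{C+1}F(x,w) = Σ cₖwᵏ), if A = B(C+1) − p₁ and C = (p₁² − 2p₂ + 2p₁B − B²)/B², then c₁ = c₂ = 0 and c₃ = p₃ − p₂p₁ + (1/3)(p₁B² + p₁³ + 2p₁²B − 4p₂B). -/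
open Filter Topology


lemma myHasFPS {a : ℕ → ℂ} {g : ℂ → ℂ}
    (h : ∀ᶠ w in 𝓝 (0:ℂ), HasSum (fun k => a k * w ^ k) (g w)) :
    HasFPowerSeriesAt g (FormalMultilinearSeries.ofScalars ℂ a) 0 := by
  rw [hasFPowerSeriesAt_iff]
  filter_upwards [h] with w hw
  have hco : ∀ k, (FormalMultilinearSeries.ofScalars ℂ a).coeff k = a k := by
    intro k
    simp [FormalMultilinearSeries.ofScalars, FormalMultilinearSeries.coeff, Pi.one_def, List.ofFn_const, List.prod_replicate, one_pow]
  simpa [hco, smul_eq_mul, mul_comm] using hw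

lemma myCoeff {a : ℕ → ℂ} {g : ℂ → ℂ}
    (h : ∀ᶠ w in 𝓝 (0:ℂ), HasSum (fun k => a k * w ^ k) (g w)) (n : ℕ) :
    (n.factorial : ℂ) * a n = iteratedDeriv n g 0 := by
  obtain ⟨r, hr⟩ := myHasFPS h
  have key := hr.factorial_smul (1 : ℂ) n
  rw [iteratedDeriv_eq_iteratedFDeriv, ← key]
  have hco : (FormalMultilinearSeries.ofScalars ℂ a n fun _ => (1:ℂ)) = a n := by
    simp [FormalMultilinearSeries.ofScalars]
  rw [hco, nsmul_eq_mul]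

noncomputable def Uf (A B C w : ℂ) : ℂ :=
  A * w / (1 - B * w) + (C + 1) * Complex.log (1 - B * w)
noncomputable def U1f (A B C w : ℂ) : ℂ :=
  A / (1 - B * w) ^ 2 - B * (C + 1) / (1 - B * w)
noncomputable def U2f (A B C w : ℂ) : ℂ :=
  2 * A * B / (1 - B * w) ^ 3 - B ^ 2 * (C + 1) / (1 - B * w) ^ 2
noncomputable def U3f (A B C w : ℂ) : ℂ :=
  6 * A * B ^ 2 / (1 - B * w) ^ 4 - 2 * B ^ 3 * (C + 1) / (1 - B * w) ^ 3

lemma hden (B w : ℂ) : HasDerivAt (fun w : ℂ => 1 - B * w) (-B) w := by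
  simpa using ((hasDerivAt_id w).const_mul B).const_sub 1

lemma hU (A B C : ℂ) {w : ℂ} (hw : 1 - B * w ∈ Complex.slitPlane) :
    HasDerivAt (Uf A B C) (U1f A B C w) w := by
  have hne : 1 - B * w ≠ 0 := Complex.slitPlane_ne_zero hw
  have h1 := hden B w
  have h2 : HasDerivAt (fun w : ℂ => A * w) A w := by
    simpa using (hasDerivAt_id w).const_mul A
  have h3 := h2.div h1 hne
  have h4 := (h1.clog hw).const_mul (C + 1)
  have heq : U1f A B C w
      = (A * (1 - B * w) - A * w * (-B)) / (1 - B * w) ^ 2 + (C + 1) * (-B / (1 - B * w)) := by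
    rw [U1f]; field_simp; ring
  rw [heq]; exact h3.add h4

lemma hU1 (A B C : ℂ) {w : ℂ} (hw : 1 - B * w ∈ Complex.slitPlane) :
    HasDerivAt (U1f A B C) (U2f A B C w) w := by
  have hne : 1 - B * w ≠ 0 := Complex.slitPlane_ne_zero hw
  have h1 := hden B w
  have t1 := (hasDerivAt_const w A).div (h1.pow 2) (pow_ne_zero 2 hne)
  have t2 := (hasDerivAt_const w (B * (C + 1))).div h1 hne
  have heq : U2f A B C w
      = (0 * (1 - B * w) ^ 2 - A * ((2:ℕ) * (1 - B * w) ^ (2 - 1) * (-B))) / ((1 - B * w) ^ 2) ^ 2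
        - (0 * (1 - B * w) - B * (C + 1) * (-B)) / (1 - B * w) ^ 2 := by
    rw [U2f]; field_simp; ring
  rw [heq]; exact t1.sub t2

lemma hU2 (A B C : ℂ) {w : ℂ} (hw : 1 - B * w ∈ Complex.slitPlane) :
    HasDerivAt (U2f A B C) (U3f A B C w) w := by
  have hne : 1 - B * w ≠ 0 := Complex.slitPlane_ne_zero hw
  have h1 := hden B w
  have t1 := (hasDerivAt_const w (2 * A * B)).div (h1.pow 3) (pow_ne_zero 3 hne)
  have t2 := (hasDerivAt_const w (B ^ 2 * (C + 1))).div (h1.pow 2) (pow_ne_zero 2 hne)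
  have heq : U3f A B C w
      = (0 * (1 - B * w) ^ 3 - 2 * A * B * ((3:ℕ) * (1 - B * w) ^ (3 - 1) * (-B)))
          / ((1 - B * w) ^ 3) ^ 2
        - (0 * (1 - B * w) ^ 2 - B ^ 2 * (C + 1) * ((2:ℕ) * (1 - B * w) ^ (2 - 1) * (-B)))
          / ((1 - B * w) ^ 2) ^ 2 := by
    rw [U3f]; field_simp; ring
  rw [heq]; exact t1.sub t2

/-- With `A = B(C+1) − p₁` and `C = (p₁² − 2p₂ + 2p₁B − B²)/B²` one has
`c₁ = c₂ = 0` and `c₃ = p₃ − p₂p₁ + (p₁B² + p₁³ + 2p₁²B − 4p₂B)/3`. -/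
theorem stmt_11 (f : ℂ → ℂ) (p : ℕ → ℂ)
    (hF : ∀ᶠ w in 𝓝 (0:ℂ), HasSum (fun m => p m * w ^ m) (f w))
    (hp0 : p 0 = 1)
    (A B C : ℂ) (hB : B ≠ 0)
    (hA : A = B * (C + 1) - p 1)
    (hC : C = (p 1 ^ 2 - 2 * p 2 + 2 * p 1 * B - B ^ 2) / B ^ 2)
    (c : ℕ → ℂ)
    (hc : ∀ᶠ w in 𝓝 (0:ℂ), HasSum (fun k => c k * w ^ k)
      (Complex.exp (-A * w / (B * w - 1)) * (1 - B * w) ^ (C + 1) * f w)) :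
    c 1 = 0 ∧ c 2 = 0 ∧
    c 3 = p 3 - p 2 * p 1 +
      (p 1 * B ^ 2 + p 1 ^ 3 + 2 * p 1 ^ 2 * B - 4 * p 2 * B) / 3 := by
  subst hA
  set A : ℂ := B * (C + 1) - p 1 with hA
  have hc' : ∀ᶠ w in 𝓝 (0:ℂ), HasSum (fun k => c k * w ^ k)
      ((fun w => Complex.exp (-A * w / (B * w - 1)) * (1 - B * w) ^ (C + 1) * f w) w) := hc
  set g : ℂ → ℂ := fun w => Complex.exp (-A * w / (B * w - 1)) * (1 - B * w) ^ (C + 1) * f w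
    with hgdef
  -- analyticity of f
  have hfa : AnalyticAt ℂ f 0 := (myHasFPS hF).analyticAt
  obtain ⟨s, hs_nhds, hs_an⟩ := hfa.exists_mem_nhds_analyticOnNhd
  have hd1 := hs_an.deriv
  have hd2 := hd1.deriv
  have hslit : ∀ᶠ w in 𝓝 (0:ℂ), 1 - B * w ∈ Complex.slitPlane := by
    have hcont : ContinuousAt (fun w : ℂ => 1 - B * w) 0 := by fun_prop
    have h0 : (1:ℂ) - B * 0 ∈ Complex.slitPlane := by
      simp [Complex.mem_slitPlane_iff]
    exact hcont.eventually_mem (Complex.isOpen_slitPlane.mem_nhds h0)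
  have hsmem : ∀ᶠ w in 𝓝 (0:ℂ), w ∈ s := hs_nhds
  set E : ℂ → ℂ := fun w => Complex.exp (Uf A B C w) with hEdef
  set D1 : ℂ → ℂ := fun w => E w * (U1f A B C w * f w + deriv f w) with hD1def
  set D2 : ℂ → ℂ := fun w => E w * ((U2f A B C w + U1f A B C w ^ 2) * f w
      + 2 * U1f A B C w * deriv f w + deriv (deriv f) w) with hD2def
  have hgE : ∀ᶠ w in 𝓝 (0:ℂ), g w = E w * f w := by
    filter_upwards [hslit] with w hw
    have hne : 1 - B * w ≠ 0 := Complex.slitPlane_ne_zero hw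
    have harg : -A * w / (B * w - 1) = A * w / (1 - B * w) := by
      rw [show B * w - 1 = -(1 - B * w) from by ring, show -A * w = -(A * w) from by ring,
        neg_div_neg_eq]
    have : g w = Complex.exp (-A * w / (B * w - 1))
        * Complex.exp (Complex.log (1 - B * w) * (C + 1)) * f w := by
      rw [hgdef]
      simp only []
      rw [Complex.cpow_def_of_ne_zero hne]
    rw [this, ← Complex.exp_add, hEdef]
    simp only []
    congr 2
    rw [Uf, harg]
    ring
  have hE' : ∀ {w : ℂ}, 1 - B * w ∈ Complex.slitPlane →
      HasDerivAt E (E w * U1f A B C w) w := fun hw => (hU A B C hw).cexp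
  have hDg : ∀ w, w ∈ s → 1 - B * w ∈ Complex.slitPlane →
      HasDerivAt (fun w => E w * f w) (D1 w) w := by
    intro w hws hw
    have hf' : HasDerivAt f (deriv f w) w := (hs_an w hws).differentiableAt.hasDerivAt
    have h := (hE' hw).mul hf'
    refine h.congr_deriv ?_
    rw [hD1def]; ring
  have hDD1 : ∀ w, w ∈ s → 1 - B * w ∈ Complex.slitPlane →
      HasDerivAt D1 (D2 w) w := by
    intro w hws hw
    have hf' : HasDerivAt f (deriv f w) w := (hs_an w hws).differentiableAt.hasDerivAt
    have hf'' : HasDerivAt (deriv f) (deriv (deriv f) w) w :=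
      (hd1 w hws).differentiableAt.hasDerivAt
    have hin := ((hU1 A B C hw).mul hf').add hf''
    have h := (hE' hw).mul hin
    refine h.congr_deriv ?_
    simp only [Pi.add_apply, Pi.mul_apply, Pi.pow_apply]
    rw [hD2def]; ring
  have hDD2 : ∀ w, w ∈ s → 1 - B * w ∈ Complex.slitPlane →
      HasDerivAt D2 (E w * ((U3f A B C w + 3 * U1f A B C w * U2f A B C w + U1f A B C w ^ 3) * f w
        + 3 * (U2f A B C w + U1f A B C w ^ 2) * deriv f w
        + 3 * U1f A B C w * deriv (deriv f) w + deriv (deriv (deriv f)) w)) w := by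
    intro w hws hw
    have hf' : HasDerivAt f (deriv f w) w := (hs_an w hws).differentiableAt.hasDerivAt
    have hf'' : HasDerivAt (deriv f) (deriv (deriv f) w) w :=
      (hd1 w hws).differentiableAt.hasDerivAt
    have hf''' : HasDerivAt (deriv (deriv f)) (deriv (deriv (deriv f)) w) w :=
      (hd2 w hws).differentiableAt.hasDerivAt
    have hin := ((((hU2 A B C hw).add ((hU1 A B C hw).pow 2)).mul hf').add
      (((hU1 A B C hw).const_mul 2).mul hf'')).add hf'''
    have h := (hE' hw).mul hin
    refine h.congr_deriv ?_
    push_cast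
    simp only [Pi.add_apply, Pi.mul_apply, Pi.pow_apply]
    ring
  have hderiv1 : ∀ᶠ w in 𝓝 (0:ℂ), deriv g w = D1 w := by
    filter_upwards [hgE.eventually_nhds, hslit, hsmem] with w hEw hw hws
    rw [Filter.EventuallyEq.deriv_eq hEw, (hDg w hws hw).deriv]
  have hderiv2 : ∀ᶠ w in 𝓝 (0:ℂ), deriv (deriv g) w = D2 w := by
    filter_upwards [hderiv1.eventually_nhds, hslit, hsmem] with w hEw hw hws
    rw [Filter.EventuallyEq.deriv_eq hEw, (hDD1 w hws hw).deriv]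
  have h0s : (0:ℂ) ∈ s := mem_of_mem_nhds hs_nhds
  have h0slit : (1:ℂ) - B * 0 ∈ Complex.slitPlane := by simp [Complex.mem_slitPlane_iff]
  -- values at 0
  have hU0 : Uf A B C 0 = 0 := by simp [Uf]
  have hE0 : E 0 = 1 := by rw [hEdef]; simp only []; rw [hU0, Complex.exp_zero]
  have hU10 : U1f A B C 0 = A - B * (C + 1) := by simp [U1f]
  have hU20 : U2f A B C 0 = 2 * A * B - B ^ 2 * (C + 1) := by simp [U2f]
  have hU30 : U3f A B C 0 = 6 * A * B ^ 2 - 2 * B ^ 3 * (C + 1) := by simp [U3f]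
  have hf0 : f 0 = 1 := by
    have := myCoeff hF 0
    rw [iteratedDeriv_zero] at this
    simpa [hp0, Nat.factorial] using this.symm
  have hdf0 : deriv f 0 = p 1 := by
    have := myCoeff hF 1
    rw [iteratedDeriv_one] at this
    simpa [Nat.factorial] using this.symm
  have hddf0 : deriv (deriv f) 0 = 2 * p 2 := by
    have := myCoeff hF 2
    rw [show (2:ℕ) = 1 + 1 from rfl, iteratedDeriv_succ, iteratedDeriv_one] at this
    simpa [Nat.factorial] using this.symm
  have hdddf0 : deriv (deriv (deriv f)) 0 = 6 * p 3 := by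
    have := myCoeff hF 3
    rw [show (3:ℕ) = 2 + 1 from rfl, iteratedDeriv_succ,
      show (2:ℕ) = 1 + 1 from rfl, iteratedDeriv_succ, iteratedDeriv_one] at this
    simpa [Nat.factorial] using this.symm
  have hCB : (C + 1) * B ^ 2 = p 1 ^ 2 - 2 * p 2 + 2 * p 1 * B := by
    subst hC
    field_simp
    ring
  -- the coefficients
  have hcoef1 : (1 : ℂ) * c 1 = D1 0 := by
    have := myCoeff hc' 1
    rw [iteratedDeriv_one] at this
    rw [← hderiv1.self_of_nhds]
    simpa [Nat.factorial] using this
  have hcoef2 : (2 : ℂ) * c 2 = D2 0 := by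
    have := myCoeff hc' 2
    rw [show (2:ℕ) = 1 + 1 from rfl, iteratedDeriv_succ, iteratedDeriv_one] at this
    rw [← hderiv2.self_of_nhds]
    simpa [Nat.factorial] using this
  have hcoef3 : (6 : ℂ) * c 3
      = E 0 * ((U3f A B C 0 + 3 * U1f A B C 0 * U2f A B C 0 + U1f A B C 0 ^ 3) * f 0
        + 3 * (U2f A B C 0 + U1f A B C 0 ^ 2) * deriv f 0
        + 3 * U1f A B C 0 * deriv (deriv f) 0 + deriv (deriv (deriv f)) 0) := by
    have := myCoeff hc' 3
    rw [show (3:ℕ) = 2 + 1 from rfl, iteratedDeriv_succ,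
      show (2:ℕ) = 1 + 1 from rfl, iteratedDeriv_succ, iteratedDeriv_one] at this
    have hd3 : deriv (deriv (deriv g)) 0
        = E 0 * ((U3f A B C 0 + 3 * U1f A B C 0 * U2f A B C 0 + U1f A B C 0 ^ 3) * f 0
        + 3 * (U2f A B C 0 + U1f A B C 0 ^ 2) * deriv f 0
        + 3 * U1f A B C 0 * deriv (deriv f) 0 + deriv (deriv (deriv f)) 0) := by
      rw [Filter.EventuallyEq.deriv_eq hderiv2, (hDD2 0 h0s h0slit).deriv]
    rw [hd3] at this
    simpa [Nat.factorial] using this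
  rw [hD1def] at hcoef1
  rw [hD2def] at hcoef2
  simp only [] at hcoef1 hcoef2
  simp only [hE0, hU10, hU20, hU30, hf0, hdf0, hddf0, hdddf0] at hcoef1 hcoef2 hcoef3
  refine ⟨?_, ?_, ?_⟩
  · linear_combination hcoef1
  · linear_combination hcoef2 / 2 + hCB / 2
  · linear_combination hcoef3 / 6 + (2 * B / 3) * hCB
end

section
/- For the Jacobi polynomials Pₙ^{(α,β)}(x) with generating function 2^{α+β}(1+R−w)^{−α}(1+R+w)^{−β}/R = Σ_{n≥0} Pₙ^{(α,β)}(x)wⁿ, where R = √(1−2xw+w²), take B = 1, C = α, A = ½(α+β+2)(1−x). Then the coefficients cₖ of e^{−Aw/(w−1)}(1−w)^{α+1}F(x,w) satisfy c₀ = 1, c₁ = 0, and c₂ = (1/8)[−α + 3β − 2(α+3β+4)x + (3α+3β+8)x²]. -/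
open Filter Topology

namespace StmtAux16

open Complex

noncomputable section

def q (x w : ℂ) : ℂ := 1 - 2 * x * w + w ^ 2
def R (x w : ℂ) : ℂ := q x w ^ ((1:ℂ)/2)
def Rd (x w : ℂ) : ℂ := (w - x) * q x w ^ (-((1:ℂ)/2))
def E (A w : ℂ) : ℂ := Complex.exp (-A * w / (w - 1))
def Ed (A w : ℂ) : ℂ := E A w * (A / (w - 1) ^ 2)
def L (α w : ℂ) : ℂ := (1 - w) ^ (α + 1)
def Ld (α w : ℂ) : ℂ := -((α + 1) * (1 - w) ^ α)
def M (α x w : ℂ) : ℂ := (1 + R x w - w) ^ (-α)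
def Md (α x w : ℂ) : ℂ := -α * (1 + R x w - w) ^ (-α - 1) * (Rd x w - 1)
def N (β x w : ℂ) : ℂ := (1 + R x w + w) ^ (-β)
def Nd (β x w : ℂ) : ℂ := -β * (1 + R x w + w) ^ (-β - 1) * (Rd x w + 1)
def K (α β x w : ℂ) : ℂ := 2 ^ (α + β) * M α x w * N β x w / R x w
def Kd (α β x w : ℂ) : ℂ :=
  ((2 ^ (α + β) * Md α x w * N β x w + 2 ^ (α + β) * M α x w * Nd β x w) * R x w -
    2 ^ (α + β) * M α x w * N β x w * Rd x w) / R x w ^ 2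
def g (α β x A w : ℂ) : ℂ := E A w * L α w * K α β x w
def G1 (α β x A w : ℂ) : ℂ :=
  (Ed A w * L α w + E A w * Ld α w) * K α β x w + E A w * L α w * Kd α β x w

variable (α β x A : ℂ) {w : ℂ}

lemma qv : q x 0 = 1 := by simp [q]
lemma Rv : R x 0 = 1 := by simp [R, q]
lemma Rdv : Rd x 0 = -x := by simp [Rd, q]
lemma Ev : E A 0 = 1 := by simp [E]
lemma Edv : Ed A 0 = A := by simp [Ed, E]
lemma Lv : L α 0 = 1 := by simp [L]
lemma Ldv : Ld α 0 = -(α + 1) := by simp [Ld]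
lemma Mv : M α x 0 = 2 ^ (-α) := by rw [M, Rv]; norm_num
lemma Nv : N β x 0 = 2 ^ (-β) := by rw [N, Rv]; norm_num
lemma Mdv : Md α x 0 = -α * 2 ^ (-α - 1) * (-x - 1) := by rw [Md, Rv, Rdv]; norm_num
lemma Ndv : Nd β x 0 = -β * 2 ^ (-β - 1) * (-x + 1) := by rw [Nd, Rv, Rdv]; norm_num

lemma two_ne : (2:ℂ) ≠ 0 := two_ne_zero
lemma pow_na_ne : (2:ℂ) ^ (-α) ≠ 0 := by simp [Complex.cpow_eq_zero_iff]
lemma pab : (2:ℂ) ^ (α + β) = 1 / ((2:ℂ) ^ (-α) * (2:ℂ) ^ (-β)) := by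
  rw [← Complex.cpow_add _ _ two_ne, one_div, ← Complex.cpow_neg]
  congr 1; ring
lemma pa1 : (2:ℂ) ^ (-α - 1) = (2:ℂ) ^ (-α) / 2 := by
  rw [show -α - 1 = -α + (-1) by ring, Complex.cpow_add _ _ two_ne, Complex.cpow_neg_one]
  ring
lemma pa2 : (2:ℂ) ^ (-α - 1 - 1) = (2:ℂ) ^ (-α) / 4 := by
  rw [show -α - 1 - 1 = -α + (-1) + (-1) by ring, Complex.cpow_add _ _ two_ne,
    Complex.cpow_add _ _ two_ne, Complex.cpow_neg_one]
  ring

lemma Kv : K α β x 0 = 1 := by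
  rw [K, Rv, Mv, Nv, pab]; field_simp

lemma Kdv : Kd α β x 0 = α * (x + 1) / 2 + β * (x - 1) / 2 + x := by
  rw [Kd, Rv, Rdv, Mv, Nv, Mdv, Ndv, pab, pa1, pa1 β]
  have ha := pow_na_ne α
  have hb := pow_na_ne β
  field_simp
  ring

lemma hqd (w : ℂ) : HasDerivAt (q x) (2 * w - 2 * x) w := by
  have h := (((hasDerivAt_id w).const_mul (2 * x)).const_sub 1).add (hasDerivAt_pow 2 w)
  refine h.congr_deriv (Eq.symm ?_)
  norm_num
  ring

lemma hRd (hq : q x w ∈ slitPlane) : HasDerivAt (R x) (Rd x w) w := by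
  have h := (hqd x w).cpow_const (c := (1:ℂ)/2) hq
  refine h.congr_deriv (Eq.symm ?_)
  rw [Rd, show (1:ℂ)/2 - 1 = -((1:ℂ)/2) by norm_num]
  ring

lemma hEd (hw : w ≠ 1) : HasDerivAt (E A) (Ed A w) w := by
  have hw' : w - 1 ≠ 0 := sub_ne_zero.2 hw
  have h := (((hasDerivAt_id w).const_mul (-A)).div ((hasDerivAt_id w).sub_const 1) hw').cexp
  refine h.congr_deriv (Eq.symm ?_)
  simp only [Ed, E, id_eq]
  congr 1
  field_simp
  ring

lemma hLd (hs : (1:ℂ) - w ∈ slitPlane) : HasDerivAt (L α) (Ld α w) w := by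
  have h := ((hasDerivAt_id w).const_sub 1).cpow_const (c := α + 1) hs
  refine h.congr_deriv (Eq.symm ?_)
  simp only [Ld, id_eq, show α + 1 - 1 = α by ring]
  ring

lemma hMd (hq : q x w ∈ slitPlane) (hm : 1 + R x w - w ∈ slitPlane) :
    HasDerivAt (M α x) (Md α x w) w := by
  have h := (((hRd x hq).const_add 1).sub (hasDerivAt_id w)).cpow_const (c := -α) hm
  exact h

lemma hNd (hq : q x w ∈ slitPlane) (hn : 1 + R x w + w ∈ slitPlane) :
    HasDerivAt (N β x) (Nd β x w) w := by
  have h := (((hRd x hq).const_add 1).add (hasDerivAt_id w)).cpow_const (c := -β) hn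
  exact h

lemma Rne (hq : q x w ∈ slitPlane) : R x w ≠ 0 := by
  rw [R]
  simp [Complex.cpow_eq_zero_iff, Complex.slitPlane_ne_zero hq]

lemma hKd (hq : q x w ∈ slitPlane) (hm : 1 + R x w - w ∈ slitPlane)
    (hn : 1 + R x w + w ∈ slitPlane) : HasDerivAt (K α β x) (Kd α β x w) w := by
  have h := ((((hMd α x hq hm).const_mul (2 ^ (α + β))).mul (hNd β x hq hn)).div
    (hRd x hq) (Rne x hq))
  exact h

lemma hgd (hq : q x w ∈ slitPlane) (hm : 1 + R x w - w ∈ slitPlane)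
    (hn : 1 + R x w + w ∈ slitPlane) (hs : (1:ℂ) - w ∈ slitPlane) (hw : w ≠ 1) :
    HasDerivAt (g α β x A) (G1 α β x A w) w :=
  ((hEd A hw).mul (hLd α hs)).mul (hKd α β x hq hm hn)

lemma good_ev : ∀ᶠ w in 𝓝 (0:ℂ), q x w ∈ slitPlane ∧ 1 + R x w - w ∈ slitPlane ∧
    1 + R x w + w ∈ slitPlane ∧ (1:ℂ) - w ∈ slitPlane ∧ w ≠ 1 := by
  have hqc : Continuous (q x) := by
    unfold q; continuity
  have hRc : ContinuousAt (R x) 0 := by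
    apply hqc.continuousAt.cpow continuousAt_const
    rw [qv]; exact one_mem_slitPlane
  have h1 : ∀ᶠ w in 𝓝 (0:ℂ), q x w ∈ slitPlane := by
    apply hqc.continuousAt.eventually_mem
    rw [qv]; exact isOpen_slitPlane.mem_nhds one_mem_slitPlane
  have h2 : ∀ᶠ w in 𝓝 (0:ℂ), 1 + R x w - w ∈ slitPlane := by
    apply ContinuousAt.eventually_mem (f := fun w => 1 + R x w - w)
    · exact (hRc.const_add 1).sub continuousAt_id
    · apply isOpen_slitPlane.mem_nhds
      rw [Rv, show (1:ℂ) + 1 - 0 = 2 by norm_num]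
      exact ofNat_mem_slitPlane 2
  have h3 : ∀ᶠ w in 𝓝 (0:ℂ), 1 + R x w + w ∈ slitPlane := by
    apply ContinuousAt.eventually_mem (f := fun w => 1 + R x w + w)
    · exact (hRc.const_add 1).add continuousAt_id
    · apply isOpen_slitPlane.mem_nhds
      rw [Rv, show (1:ℂ) + 1 + 0 = 2 by norm_num]
      exact ofNat_mem_slitPlane 2
  have h4 : ∀ᶠ w in 𝓝 (0:ℂ), (1:ℂ) - w ∈ slitPlane := by
    apply ContinuousAt.eventually_mem (f := fun w : ℂ => 1 - w)
    · exact continuousAt_const.sub continuousAt_id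
    · apply isOpen_slitPlane.mem_nhds
      rw [show (1:ℂ) - 0 = 1 by norm_num]
      exact one_mem_slitPlane
  have h5 : ∀ᶠ w in 𝓝 (0:ℂ), w ≠ 1 := eventually_ne_nhds (by norm_num)
  filter_upwards [h1, h2, h3, h4, h5] with w a b c d e
  exact ⟨a, b, c, d, e⟩

lemma hq0 : q x 0 ∈ slitPlane := by rw [qv]; exact one_mem_slitPlane

lemma hm0 : 1 + R x 0 - 0 ∈ slitPlane := by
  rw [Rv, show (1:ℂ) + 1 - 0 = 2 by norm_num]; exact ofNat_mem_slitPlane 2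

lemma hn0 : 1 + R x 0 + 0 ∈ slitPlane := by
  rw [Rv, show (1:ℂ) + 1 + 0 = 2 by norm_num]; exact ofNat_mem_slitPlane 2

lemma hRd0 : HasDerivAt (Rd x) (1 - x ^ 2) 0 := by
  have h := ((hasDerivAt_id (0:ℂ)).sub_const x).mul
    ((hqd x 0).cpow_const (c := -((1:ℂ)/2)) (hq0 x))
  refine h.congr_deriv (Eq.symm ?_)
  simp [qv, Complex.one_cpow]
  ring

lemma hEd0 : HasDerivAt (Ed A) (A * A + 2 * A) 0 := by
  have h := (hEd A (show (0:ℂ) ≠ 1 by norm_num)).mul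
    ((hasDerivAt_const (0:ℂ) A).div (((hasDerivAt_id (0:ℂ)).sub_const 1).pow 2)
      (by norm_num))
  refine h.congr_deriv (Eq.symm ?_)
  rw [Edv, Ev]
  norm_num
  ring

lemma hLd0 : HasDerivAt (Ld α) (α * (α + 1)) 0 := by
  have h := ((((hasDerivAt_id (0:ℂ)).const_sub 1).cpow_const (c := α)
    (by simp)).const_mul (α + 1)).neg
  refine h.congr_deriv (Eq.symm ?_)
  simp [Complex.one_cpow]
  ring

lemma G1v : G1 α β x A 0 = A - (α + 1) + (α * (x + 1) / 2 + β * (x - 1) / 2 + x) := by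
  rw [G1, Edv, Ev, Lv, Ldv, Kv, Kdv]
  ring

set_option maxHeartbeats 2000000 in
lemma hG1d : HasDerivAt (G1 α β x A)
    ((A - (α + 1) + (α * (x + 1) / 2 + β * (x - 1) / 2 + x)) ^ 2 +
      (2 * A - (α + 1) - α * (1 - 2 * x - 3 * x ^ 2) / 4 -
        β * (1 + 2 * x - 3 * x ^ 2) / 4 + 2 * x ^ 2 - 1)) 0 := by
  have hE0 := hEd A (show (0:ℂ) ≠ 1 by norm_num)
  have hL0 := hLd α (w := 0) (by simp)
  have hM0 := hMd α x (hq0 x) (hm0 x)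
  have hN0 := hNd β x (hq0 x) (hn0 x)
  have hR0 := hRd x (hq0 x)
  have hinner0 : HasDerivAt (fun y => 1 + R x y - y) (Rd x 0 - 1) 0 :=
    (hR0.const_add 1).sub (hasDerivAt_id 0)
  have hinner0' : HasDerivAt (fun y => 1 + R x y + y) (Rd x 0 + 1) 0 :=
    (hR0.const_add 1).add (hasDerivAt_id 0)
  have hMd0 := ((hinner0.cpow_const (c := -α - 1) (hm0 x)).const_mul (-α)).mul
    ((hRd0 x).sub_const 1)
  have hNd0 := ((hinner0'.cpow_const (c := -β - 1) (hn0 x)).const_mul (-β)).mul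
    ((hRd0 x).add_const 1)
  have t1 := ((hMd0.const_mul ((2:ℂ) ^ (α + β))).mul hN0).add
    ((hM0.const_mul ((2:ℂ) ^ (α + β))).mul hNd0)
  have t2 := (t1.mul hR0).sub (((hM0.const_mul ((2:ℂ) ^ (α + β))).mul hN0).mul (hRd0 x))
  have hKd0 := t2.div (hR0.pow 2) (pow_ne_zero 2 (Rne x (hq0 x)))
  have hK0 := hKd α β x (hq0 x) (hm0 x) (hn0 x)
  have hfinal := (((hEd0 A).mul hL0).add (hE0.mul (hLd0 α))).mul hK0 |>.add
    ((hE0.mul hL0).mul hKd0)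
  refine hfinal.congr_deriv (Eq.symm ?_)
  simp only [Pi.mul_apply, Pi.add_apply, Pi.sub_apply, Pi.div_apply, Pi.pow_apply]
  rw [Edv, Ev, Lv, Ldv, Kv, Kdv, Mv, Nv, Mdv, Ndv, Rv, Rdv]
  norm_num
  rw [pa1 α, pa1 β, pa2 α, pa2 β]
  have hu : (2:ℂ) ^ (α + β) * (2:ℂ) ^ (-α) * (2:ℂ) ^ (-β) = 1 := by
    rw [← Complex.cpow_add _ _ two_ne, ← Complex.cpow_add _ _ two_ne,
      show α + β + -α + -β = 0 by ring, Complex.cpow_zero]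
  linear_combination (-((A - 1 - α) * (α * (x + 1) / 2 + β * (x - 1) / 2 + x) +
    (α * (α + 1) * (x + 1) ^ 2 / 4 - α * (1 - x ^ 2) / 2) +
    2 * (α * β * (x ^ 2 - 1) / 4) +
    (β * (β + 1) * (1 - x) ^ 2 / 4 - β * (1 - x ^ 2) / 2) - (1 - x ^ 2) +
    2 * (α * (x + 1) / 2 + β * (x - 1) / 2 + x) * x)) * hu


lemma ofScalars_coeff' (c : ℕ → ℂ) (n : ℕ) :
    (FormalMultilinearSeries.ofScalars ℂ c).coeff n = c n := by
  show FormalMultilinearSeries.ofScalars ℂ c n (fun _ => (1:ℂ)) = c n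
  rw [FormalMultilinearSeries.ofScalars_apply_eq]
  simp

lemma coeff_mul_factorial (f : ℂ → ℂ) (c : ℕ → ℂ)
    (hc : ∀ᶠ w in 𝓝 (0:ℂ), HasSum (fun k => c k * w ^ k) (f w)) (n : ℕ) :
    (Nat.factorial n : ℂ) * c n = iteratedDeriv n f 0 := by
  have hp : HasFPowerSeriesAt f (FormalMultilinearSeries.ofScalars ℂ c) 0 := by
    rw [hasFPowerSeriesAt_iff]
    refine hc.mono fun z hz => ?_
    have h2 : (fun n => z ^ n • (FormalMultilinearSeries.ofScalars ℂ c).coeff n)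
        = fun n => c n * z ^ n := by
      funext n
      rw [ofScalars_coeff', smul_eq_mul]; ring
    rw [h2]
    simpa using hz
  obtain ⟨r, hr⟩ := hp
  have h := hr.factorial_smul (1 : ℂ) n
  rw [← iteratedDeriv_eq_iteratedFDeriv] at h
  rw [← h, FormalMultilinearSeries.ofScalars_apply_eq]
  simp [smul_eq_mul]

end

end StmtAux16

open StmtAux16 in
/-- Jacobi into Laguerre: with `B = 1`, `C = α`, `A = ½(α+β+2)(1−x)`,
the coefficients of `e^{-Aw/(w-1)}(1-w)^{α+1} F(x,w)` satisfy `c₀ = 1`,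
`c₁ = 0`, `c₂ = (1/8)[−α + 3β − 2(α+3β+4)x + (3α+3β+8)x²]`, where
`F(x,w) = 2^{α+β}(1+R−w)^{−α}(1+R+w)^{−β}/R`, `R = √(1−2xw+w²)`. -/
theorem stmt_16 (α β x : ℂ) (P : ℕ → ℂ)
    (hP : ∀ᶠ w in 𝓝 (0:ℂ), HasSum (fun m => P m * w ^ m)
      ((2:ℂ) ^ (α + β) *
        (1 + (1 - 2 * x * w + w ^ 2) ^ ((1:ℂ)/2) - w) ^ (-α) *
        (1 + (1 - 2 * x * w + w ^ 2) ^ ((1:ℂ)/2) + w) ^ (-β) /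
        (1 - 2 * x * w + w ^ 2) ^ ((1:ℂ)/2)))
    (A : ℂ) (hA : A = (α + β + 2) * (1 - x) / 2)
    (c : ℕ → ℂ)
    (hc : ∀ᶠ w in 𝓝 (0:ℂ), HasSum (fun k => c k * w ^ k)
      (Complex.exp (-A * w / (w - 1)) * (1 - w) ^ (α + 1) *
        ((2:ℂ) ^ (α + β) *
          (1 + (1 - 2 * x * w + w ^ 2) ^ ((1:ℂ)/2) - w) ^ (-α) *
          (1 + (1 - 2 * x * w + w ^ 2) ^ ((1:ℂ)/2) + w) ^ (-β) /
          (1 - 2 * x * w + w ^ 2) ^ ((1:ℂ)/2)))) :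
    c 0 = 1 ∧ c 1 = 0 ∧
    c 2 = (-α + 3 * β - 2 * (α + 3 * β + 4) * x + (3 * α + 3 * β + 8) * x ^ 2) / 8 := by
  have hc' : ∀ᶠ w in 𝓝 (0:ℂ), HasSum (fun k => c k * w ^ k) (g α β x A w) := hc
  have key := coeff_mul_factorial (g α β x A) c hc'
  -- derivative of g eventually equals G1
  have hev : deriv (g α β x A) =ᶠ[𝓝 (0:ℂ)] G1 α β x A := by
    filter_upwards [good_ev x] with w hw
    exact (hgd α β x A hw.1 hw.2.1 hw.2.2.1 hw.2.2.2.1 hw.2.2.2.2).deriv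
  have hg0 : g α β x A 0 = 1 := by
    rw [g, Ev, Lv, Kv]; ring
  have hderiv0 : deriv (g α β x A) 0 = G1 α β x A 0 := by
    refine HasDerivAt.deriv ?_
    have h0 := (good_ev x).self_of_nhds
    exact hgd α β x A h0.1 h0.2.1 h0.2.2.1 h0.2.2.2.1 h0.2.2.2.2
  refine ⟨?_, ?_, ?_⟩
  · have h := key 0
    simpa [iteratedDeriv_zero, hg0] using h
  · have h := key 1
    rw [iteratedDeriv_one, hderiv0, G1v] at h
    simp only [Nat.factorial_one, Nat.cast_one, one_mul] at h
    rw [h, hA]; ring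
  · have h := key 2
    rw [show (2:ℕ) = 1 + 1 from rfl, iteratedDeriv_succ, iteratedDeriv_one,
      hev.deriv_eq, (hG1d α β x A).deriv] at h
    have h2 : (Nat.factorial (1+1) : ℂ) = 2 := by norm_num [Nat.factorial]
    rw [h2] at h
    have htarget : (2:ℂ) * ((-α + 3 * β - 2 * (α + 3 * β + 4) * x + (3 * α + 3 * β + 8) * x ^ 2) / 8)
        = (A - (α + 1) + (α * (x + 1) / 2 + β * (x - 1) / 2 + x)) ^ 2 +
          (2 * A - (α + 1) - α * (1 - 2 * x - 3 * x ^ 2) / 4 -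
            β * (1 + 2 * x - 3 * x ^ 2) / 4 + 2 * x ^ 2 - 1) := by
      rw [hA]; ring
    rw [← htarget] at h
    exact mul_left_cancel₀ two_ne_zero h
end

section
/- For the Krawtchouk polynomials Kₙ(x;p,N) with 0 < p < 1, q = (1−p)/p, and generating function (1−qw)^x(1+w)^{N−x} = Σ_{n=0}^N binom(N,n) Kₙ(x;p,N) wⁿ, take B = 1, C = α, A = α+1−N+(1+q)x. Then the coefficients cₖ of e^{−Aw/(w−1)}(1−w)^{α+1}F(x,w) satisfy c₀ = 1, c₁ = 0, and c₂ = ½[1 + α − 3N + (3 + 2q − q²)x]. -/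
open Filter Topology

private lemma aux_coeff (c : ℕ → ℂ) (G : ℂ → ℂ)
    (hc : ∀ᶠ w in 𝓝 (0:ℂ), HasSum (fun k => c k * w ^ k) (G w)) :
    ∀ n, (n.factorial : ℂ) * c n = iteratedDeriv n G 0 := by
  have hco : ∀ n, (FormalMultilinearSeries.ofScalars ℂ c).coeff n = c n := fun n => by
    show (FormalMultilinearSeries.ofScalars ℂ c n) 1 = c n
    have := FormalMultilinearSeries.ofScalars_apply_eq (E := ℂ) (c := c) (1:ℂ) n
    simpa using this
  have hp : HasFPowerSeriesAt G (FormalMultilinearSeries.ofScalars ℂ c) 0 := by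
    rw [hasFPowerSeriesAt_iff]
    filter_upwards [hc] with w hw
    rw [zero_add]
    have : (fun n => w ^ n • (FormalMultilinearSeries.ofScalars ℂ c).coeff n)
        = fun k => c k * w ^ k := by
      funext k; rw [hco, smul_eq_mul, mul_comm]
    rw [this]; exact hw
  obtain ⟨r, hr⟩ := hp
  intro n
  have h := hr.factorial_smul (y := (1:ℂ)) n
  rw [iteratedDeriv_eq_iteratedFDeriv, ← h]
  have h2 : ((FormalMultilinearSeries.ofScalars ℂ c n) fun _ => (1:ℂ)) = c n := hco n
  rw [h2, nsmul_eq_mul]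

set_option maxHeartbeats 2000000 in
private lemma aux_deriv (q : ℝ) (x N α A : ℂ) (w : ℂ)
    (hw2 : ‖w‖ < 1/2) (hqw : ‖(q:ℂ) * w‖ < 1/2) :
    HasDerivAt (fun w => Complex.exp (-A * w / (w - 1)) * (1 - w) ^ (α + 1) *
        ((1 - (q : ℂ) * w) ^ x * (1 + w) ^ (N - x)))
      ((Complex.exp (-A * w / (w - 1)) * (1 - w) ^ (α + 1) *
        ((1 - (q : ℂ) * w) ^ x * (1 + w) ^ (N - x))) *
       (A / (w-1)^2 - (α+1)/(1-w) - (q:ℂ)*x/(1-(q:ℂ)*w) + (N-x)/(1+w))) w := by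
  have hre : |w.re| ≤ ‖w‖ := Complex.abs_re_le_norm w
  have hre2 : |((q:ℂ)*w).re| ≤ ‖(q:ℂ)*w‖ := Complex.abs_re_le_norm _
  have habs := abs_le.1 hre
  have habs2 := abs_le.1 hre2
  have s1 : (1 - w) ∈ Complex.slitPlane := by
    rw [Complex.mem_slitPlane_iff]; left; simp only [Complex.sub_re, Complex.one_re]; linarith
  have s2 : (1 - (q:ℂ) * w) ∈ Complex.slitPlane := by
    rw [Complex.mem_slitPlane_iff]; left; simp only [Complex.sub_re, Complex.one_re]; linarith
  have s3 : (1 + w) ∈ Complex.slitPlane := by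
    rw [Complex.mem_slitPlane_iff]; left; simp only [Complex.add_re, Complex.one_re]; linarith
  have n1 : (1 - w) ≠ 0 := Complex.slitPlane_ne_zero s1
  have n2 : (1 - (q:ℂ) * w) ≠ 0 := Complex.slitPlane_ne_zero s2
  have n3 : (1 + w) ≠ 0 := Complex.slitPlane_ne_zero s3
  have n1' : w - 1 ≠ 0 := by intro h; apply n1; rw [← neg_sub] at h ⊢; simp_all
  have hu : HasDerivAt (fun w : ℂ => -A * w / (w - 1)) (A / (w-1)^2) w := by
    have h1 : HasDerivAt (fun w : ℂ => -A * w) (-A) w := by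
      simpa using (hasDerivAt_id w).const_mul (-A)
    have h2 : HasDerivAt (fun w : ℂ => w - 1) 1 w := (hasDerivAt_id w).sub_const 1
    have := h1.div h2 n1'
    refine this.congr_deriv ?_
    field_simp
    ring
  have he : HasDerivAt (fun w : ℂ => Complex.exp (-A * w / (w - 1)))
      (Complex.exp (-A * w / (w - 1)) * (A / (w-1)^2)) w := hu.cexp
  have ha : HasDerivAt (fun w : ℂ => (1 - w) ^ (α + 1)) ((α+1) * (1-w)^α * (-1)) w := by
    have h2 : HasDerivAt (fun w : ℂ => 1 - w) (-1) w := (hasDerivAt_id w).const_sub 1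
    have := h2.cpow_const (c := α + 1) s1
    simpa [add_sub_cancel_right] using this
  have hb : HasDerivAt (fun w : ℂ => (1 - (q:ℂ) * w) ^ x)
      (x * (1-(q:ℂ)*w)^(x-1) * (-(q:ℂ))) w := by
    have h2 : HasDerivAt (fun w : ℂ => 1 - (q:ℂ) * w) (-(q:ℂ)) w := by
      simpa using ((hasDerivAt_id w).const_mul (q:ℂ)).const_sub 1
    exact h2.cpow_const (c := x) s2
  have hd : HasDerivAt (fun w : ℂ => (1 + w) ^ (N - x)) ((N-x) * (1+w)^(N-x-1) * 1) w := by
    have h2 : HasDerivAt (fun w : ℂ => 1 + w) 1 w := (hasDerivAt_id w).const_add 1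
    exact h2.cpow_const (c := N - x) s3
  have H := (he.mul ha).mul (hb.mul hd)
  refine H.congr_deriv ?_
  simp only [Pi.mul_apply]
  have e1 : (1 - w) ^ (α + 1) = (1-w)^α * (1-w) := by
    rw [Complex.cpow_add _ _ n1, Complex.cpow_one]
  have e2 : (1 - (q:ℂ) * w) ^ x = (1-(q:ℂ)*w)^(x-1) * (1-(q:ℂ)*w) := by
    conv_lhs => rw [show x = (x-1)+1 by ring]
    rw [Complex.cpow_add _ _ n2, Complex.cpow_one]
  have e3 : (1 + w) ^ (N - x) = (1+w)^(N-x-1) * (1+w) := by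
    conv_lhs => rw [show N - x = (N-x-1)+1 by ring]
    rw [Complex.cpow_add _ _ n3, Complex.cpow_one]
  rw [e1, e2, e3, show ((w:ℂ)-1)^2 = (1-w)^2 by ring]
  generalize Complex.exp (-A * w / (w - 1)) = E
  generalize (1 - w) ^ α = a
  generalize (1 - (q:ℂ)*w) ^ (x-1) = b
  generalize (1 + w) ^ (N-x-1) = d
  field_simp [n1, n2, n3, show (1:ℂ) - w * (q:ℂ) ≠ 0 by rwa [mul_comm]]
  ring

/-- Krawtchouk into Laguerre: with `0 < p < 1`, `q = (1−p)/p`, `B = 1`,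
`C = α`, `A = α + 1 − N + (1+q)x`, the coefficients of
`e^{-Aw/(w-1)}(1-w)^{α+1}(1-qw)^x(1+w)^{N-x}` satisfy `c₀ = 1`, `c₁ = 0`,
`c₂ = ½[1 + α − 3N + (3 + 2q − q²)x]`. -/
theorem stmt_19 (p : ℝ) (hp0 : 0 < p) (hp1 : p < 1) (q : ℝ) (hq : q = (1 - p) / p)
    (x N α : ℂ) (A : ℂ) (hA : A = α + 1 - N + (1 + (q : ℂ)) * x)
    (c : ℕ → ℂ)
    (hc : ∀ᶠ w in 𝓝 (0:ℂ), HasSum (fun k => c k * w ^ k)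
      (Complex.exp (-A * w / (w - 1)) * (1 - w) ^ (α + 1) *
        ((1 - (q : ℂ) * w) ^ x * (1 + w) ^ (N - x)))) :
    c 0 = 1 ∧ c 1 = 0 ∧
    c 2 = (1 + α - 3 * N + (3 + 2 * (q : ℂ) - (q : ℂ) ^ 2) * x) / 2 := by
  set G : ℂ → ℂ := fun w => Complex.exp (-A * w / (w - 1)) * (1 - w) ^ (α + 1) *
        ((1 - (q : ℂ) * w) ^ x * (1 + w) ^ (N - x)) with hG
  set H : ℂ → ℂ := fun w =>
      A / (w-1)^2 - (α+1)/(1-w) - (q:ℂ)*x/(1-(q:ℂ)*w) + (N-x)/(1+w) with hH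
  have hcoeff : ∀ n, (n.factorial : ℂ) * c n = iteratedDeriv n G 0 := aux_coeff c G hc
  set δ : ℝ := min (1/2) (1/(2*(|q|+1))) with hδ
  have hδpos : 0 < δ := by
    apply lt_min (by norm_num)
    positivity
  have key : ∀ w : ℂ, ‖w‖ < δ → HasDerivAt G (G w * H w) w := by
    intro w hw
    have hw2 : ‖w‖ < 1/2 := lt_of_lt_of_le hw (min_le_left _ _)
    have hwq : ‖w‖ < 1/(2*(|q|+1)) := lt_of_lt_of_le hw (min_le_right _ _)
    have hqw : ‖(q:ℂ) * w‖ < 1/2 := by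
      rw [norm_mul, Complex.norm_real, Real.norm_eq_abs]
      have h1 : (0:ℝ) ≤ |q| := abs_nonneg q
      have h2 : (0:ℝ) ≤ ‖w‖ := norm_nonneg w
      have h3 : 0 < 2*(|q|+1) := by positivity
      rw [lt_div_iff₀ h3] at hwq
      nlinarith
    exact aux_deriv q x N α A w hw2 hqw
  have hG0 : G 0 = 1 := by
    simp [hG, Complex.one_cpow]
  have hH0 : H 0 = 0 := by
    have : H 0 = A / ((0:ℂ)-1)^2 - (α+1)/(1-0) - (q:ℂ)*x/(1-(q:ℂ)*0) + (N-x)/(1+0) := rfl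
    rw [this, hA]
    norm_num
    ring
  -- derivative of H at 0
  have d1 : HasDerivAt (fun w : ℂ => A / (w-1)^2) (2*A) 0 := by
    have hpow : HasDerivAt (fun w : ℂ => (w-1)^2) ((2:ℕ) * ((0:ℂ)-1)^(2-1) * 1) 0 :=
      ((hasDerivAt_id (0:ℂ)).sub_const 1).pow 2
    have := (hasDerivAt_const (0:ℂ) A).div hpow (by norm_num)
    refine this.congr_deriv ?_
    norm_num
    ring
  have d2 : HasDerivAt (fun w : ℂ => (α+1)/(1-w)) (α+1) 0 := by
    have hden : HasDerivAt (fun w : ℂ => 1 - w) (-1) 0 := (hasDerivAt_id (0:ℂ)).const_sub 1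
    have := (hasDerivAt_const (0:ℂ) (α+1)).div hden (by norm_num)
    refine this.congr_deriv ?_
    norm_num
  have d3 : HasDerivAt (fun w : ℂ => (q:ℂ)*x/(1-(q:ℂ)*w)) ((q:ℂ)^2*x) 0 := by
    have hden : HasDerivAt (fun w : ℂ => 1 - (q:ℂ)*w) (-(q:ℂ)) 0 := by
      simpa using ((hasDerivAt_id (0:ℂ)).const_mul (q:ℂ)).const_sub 1
    have := (hasDerivAt_const (0:ℂ) ((q:ℂ)*x)).div hden (by norm_num)
    refine this.congr_deriv ?_
    norm_num
    ring
  have d4 : HasDerivAt (fun w : ℂ => (N-x)/(1+w)) (-(N-x)) 0 := by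
    have hden : HasDerivAt (fun w : ℂ => 1 + w) 1 0 := (hasDerivAt_id (0:ℂ)).const_add 1
    have := (hasDerivAt_const (0:ℂ) (N-x)).div hden (by norm_num)
    refine this.congr_deriv ?_
    norm_num
  have hH' : HasDerivAt H (2*A - (α+1) - (q:ℂ)^2*x + -(N-x)) 0 := ((d1.sub d2).sub d3).add d4
  have h0δ : ‖(0:ℂ)‖ < δ := by simpa using hδpos
  have hder0 : deriv G 0 = 0 := by
    rw [(key 0 h0δ).deriv, hG0, hH0, one_mul]
  have hev : deriv G =ᶠ[𝓝 (0:ℂ)] fun w => G w * H w := by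
    filter_upwards [Metric.ball_mem_nhds (0:ℂ) hδpos] with w hw
    exact (key w (by simpa using mem_ball_zero_iff.mp hw)).deriv
  have hGH : HasDerivAt (fun w => G w * H w)
      ((G 0 * H 0) * H 0 + G 0 * (2*A - (α+1) - (q:ℂ)^2*x + -(N-x))) 0 :=
    (key 0 h0δ).mul hH'
  have hit2 : iteratedDeriv 2 G 0 = 2*A - (α+1) - (q:ℂ)^2*x + -(N-x) := by
    rw [show (2:ℕ) = 1+1 from rfl, iteratedDeriv_succ, iteratedDeriv_one]
    rw [hev.deriv_eq, hGH.deriv, hG0, hH0]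
    ring
  have hc0 : c 0 = 1 := by
    have h := hcoeff 0
    rw [iteratedDeriv_zero, hG0] at h
    simpa using h
  have hc1 : c 1 = 0 := by
    have h := hcoeff 1
    rw [iteratedDeriv_one, hder0] at h
    simpa using h
  refine ⟨hc0, hc1, ?_⟩
  have h := hcoeff 2
  rw [hit2] at h
  norm_num at h
  linear_combination h / 2 + hA
end
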